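/- Let β₀, β₁, β₂, β₃, ρ₀, ρ₁, ρ₂, ρ₃ ∈ ℝ. Define R(t) = β₃t³ + β₂t² + β₁t + β₀ and S(t) = −4t⁴ + ρ₃t³ + ρ₂t² + ρ₁t + ρ₀. Let y be three times differentiable on an open interval I ⊆ ℝ with y'(x) ≠ 0, y(x) ≠ 0, R(y(x)) ≠ 0, and (y'(x))² = 4·y(x)²/R(y(x)) for all x ∈ I. Then for every x ∈ I (writing y = y(x)): −S(y)/R(y) − (1/2)·{y,x}(x) = (y²/R(y)²)·[ R''(y) + R'(y)/y + R(y)/y² − (5/4)·R'(y)²/R(y) ] − S(y)/R(y). -/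

import Mathlib

/-- The polynomial `R` of the biconfluent-Heun-class Bose invariant. -/
def bcheunR (β₀ β₁ β₂ β₃ : ℝ) : ℝ → ℝ := fun t =>
  β₃ * t ^ 3 + β₂ * t ^ 2 + β₁ * t + β₀

/-- The polynomial `S` of the biconfluent-Heun-class Bose invariant. -/
def bcheunS (ρ₀ ρ₁ ρ₂ ρ₃ : ℝ) : ℝ → ℝ := fun t =>
  -4 * t ^ 4 + ρ₃ * t ^ 3 + ρ₂ * t ^ 2 + ρ₁ * t + ρ₀

lemma aux_R_deriv (β₀ β₁ β₂ β₃ t : ℝ) :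
    HasDerivAt (bcheunR β₀ β₁ β₂ β₃) (3 * β₃ * t ^ 2 + 2 * β₂ * t + β₁) t := by
  have h := (((hasDerivAt_pow 3 t).const_mul β₃).add
      ((hasDerivAt_pow 2 t).const_mul β₂)).add
      (((hasDerivAt_id t).const_mul β₁).add_const β₀)
  have e : (3:ℝ) * β₃ * t ^ 2 + 2 * β₂ * t + β₁
      = β₃ * (↑(3:ℕ) * t ^ (3-1)) + β₂ * (↑(2:ℕ) * t ^ (2-1)) + β₁ * 1 := by
    push_cast; ring
  rw [show bcheunR β₀ β₁ β₂ β₃ = fun s => β₃ * s ^ 3 + β₂ * s ^ 2 + (β₁ * s + β₀) from by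
    funext s; simp [bcheunR]; ring, e]
  exact h

lemma aux_R'_deriv (β₀ β₁ β₂ β₃ t : ℝ) :
    HasDerivAt (fun s : ℝ => 3 * β₃ * s ^ 2 + 2 * β₂ * s + β₁) (6 * β₃ * t + 2 * β₂) t := by
  have h := (((hasDerivAt_pow 2 t).const_mul (3*β₃)).add
      (((hasDerivAt_id t).const_mul (2*β₂)).add_const β₁))
  have e : (6:ℝ) * β₃ * t + 2 * β₂ = 3*β₃ * (↑(2:ℕ) * t ^ (2-1)) + (2*β₂ * 1) := by
    push_cast; ring
  rw [show (fun s : ℝ => 3 * β₃ * s ^ 2 + 2 * β₂ * s + β₁)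
      = fun s : ℝ => 3*β₃ * s ^ 2 + (2*β₂ * s + β₁) from by funext s; ring, e]
  exact h

lemma aux_derivR (β₀ β₁ β₂ β₃ : ℝ) :
    deriv (bcheunR β₀ β₁ β₂ β₃) = fun t => 3 * β₃ * t ^ 2 + 2 * β₂ * t + β₁ :=
  funext fun t => (aux_R_deriv β₀ β₁ β₂ β₃ t).deriv

lemma aux_derivderivR (β₀ β₁ β₂ β₃ t : ℝ) :
    deriv (deriv (bcheunR β₀ β₁ β₂ β₃)) t = 6 * β₃ * t + 2 * β₂ := by
  rw [aux_derivR]; exact (aux_R'_deriv β₀ β₁ β₂ β₃ t).deriv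

lemma aux_N_deriv (β₀ β₁ β₃ t : ℝ) :
    HasDerivAt (fun s : ℝ => -2*β₃*s^4 + 2*β₁*s^2 + 4*β₀*s)
      (-8*β₃*t^3 + 4*β₁*t + 4*β₀) t := by
  have h := (((hasDerivAt_pow 4 t).const_mul (-2*β₃)).add
      ((hasDerivAt_pow 2 t).const_mul (2*β₁))).add
      ((hasDerivAt_id t).const_mul (4*β₀))
  have e : (-8:ℝ)*β₃*t^3 + 4*β₁*t + 4*β₀
      = -2*β₃ * (↑(4:ℕ) * t ^ (4-1)) + 2*β₁ * (↑(2:ℕ) * t ^ (2-1)) + 4*β₀ * 1 := by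
    push_cast; ring
  rw [e]; exact h

lemma aux_Rsq_deriv (β₀ β₁ β₂ β₃ t : ℝ) :
    HasDerivAt (fun s : ℝ => (bcheunR β₀ β₁ β₂ β₃ s) ^ 2)
      (2 * bcheunR β₀ β₁ β₂ β₃ t * (3 * β₃ * t ^ 2 + 2 * β₂ * t + β₁)) t := by
  have h := (aux_R_deriv β₀ β₁ β₂ β₃ t).pow 2
  have e : 2 * bcheunR β₀ β₁ β₂ β₃ t * (3 * β₃ * t ^ 2 + 2 * β₂ * t + β₁)
      = ↑(2:ℕ) * (bcheunR β₀ β₁ β₂ β₃ t) ^ (2-1) * (3 * β₃ * t ^ 2 + 2 * β₂ * t + β₁) := by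
    push_cast; ring
  rw [e]; exact h


set_option maxHeartbeats 2000000 in
/-- Core algebraic identity for the biconfluent Heun potential. -/
lemma aux_core (T β₀ β₁ β₂ β₃ : ℝ) (ht : T ≠ 0) (hpe : β₃*T^3+β₂*T^2+β₁*T+β₀ ≠ 0) :
    -(1/2) *
        (((-8 * β₃ * T ^ 3 + 4 * β₁ * T + 4 * β₀) * (β₃ * T ^ 3 + β₂ * T ^ 2 + β₁ * T + β₀) ^ 2 -
                (-2 * β₃ * T ^ 4 + 2 * β₁ * T ^ 2 + 4 * β₀ * T) *
                  (2 * (β₃ * T ^ 3 + β₂ * T ^ 2 + β₁ * T + β₀) * (3 * β₃ * T ^ 2 + 2 * β₂ * T + β₁))) /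
              ((β₃ * T ^ 3 + β₂ * T ^ 2 + β₁ * T + β₀) ^ 2) ^ 2 -
            (-2 * β₃ * T ^ 4 + 2 * β₁ * T ^ 2 + 4 * β₀ * T) / (β₃ * T ^ 3 + β₂ * T ^ 2 + β₁ * T + β₀) ^ 2 *
                ((-2 * β₃ * T ^ 4 + 2 * β₁ * T ^ 2 + 4 * β₀ * T) / (β₃ * T ^ 3 + β₂ * T ^ 2 + β₁ * T + β₀) ^ 2) /
              (4 * T ^ 2 / (β₃ * T ^ 3 + β₂ * T ^ 2 + β₁ * T + β₀)) -
          1 / 2 *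
            (((-2 * β₃ * T ^ 4 + 2 * β₁ * T ^ 2 + 4 * β₀ * T) / (β₃ * T ^ 3 + β₂ * T ^ 2 + β₁ * T + β₀) ^ 2) ^ 2 /
              (4 * T ^ 2 / (β₃ * T ^ 3 + β₂ * T ^ 2 + β₁ * T + β₀)))) =
    T ^ 2 / (β₃ * T ^ 3 + β₂ * T ^ 2 + β₁ * T + β₀) ^ 2 *
        (6 * β₃ * T + 2 * β₂ + (3 * β₃ * T ^ 2 + 2 * β₂ * T + β₁) / T +
            (β₃ * T ^ 3 + β₂ * T ^ 2 + β₁ * T + β₀) / T ^ 2 -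
          5 / 4 * (3 * β₃ * T ^ 2 + 2 * β₂ * T + β₁) ^ 2 / (β₃ * T ^ 3 + β₂ * T ^ 2 + β₁ * T + β₀)) := by
  rw [div_div_eq_mul_div, div_div_eq_mul_div]
  rw [show ((β₃ * T ^ 3 + β₂ * T ^ 2 + β₁ * T + β₀) ^ 2) ^ 2
      = (β₃ * T ^ 3 + β₂ * T ^ 2 + β₁ * T + β₀) ^ 4 from by ring]
  have hpe' : T * (T * (β₃ * T + β₂) + β₁) + β₀ ≠ 0 := by convert hpe using 1; ring
  field_simp
  ring


set_option maxHeartbeats 1000000 in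
/-- closed form of the potential of the biconfluent Heun class. -/
theorem stmt_16 (β₀ β₁ β₂ β₃ ρ₀ ρ₁ ρ₂ ρ₃ : ℝ)
    (y : ℝ → ℝ) (I : Set ℝ) (hI : IsOpen I)
    (hy : ∀ x ∈ I, DifferentiableAt ℝ y x)
    (hy' : ∀ x ∈ I, DifferentiableAt ℝ (deriv y) x)
    (hy'' : ∀ x ∈ I, DifferentiableAt ℝ (deriv (deriv y)) x)
    (hy0 : ∀ x ∈ I, deriv y x ≠ 0)
    (hyne : ∀ x ∈ I, y x ≠ 0)
    (hR : ∀ x ∈ I, bcheunR β₀ β₁ β₂ β₃ (y x) ≠ 0)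
    (heq : ∀ x ∈ I, (deriv y x) ^ 2 = 4 * (y x) ^ 2 / bcheunR β₀ β₁ β₂ β₃ (y x)) :
    ∀ x ∈ I,
      -(bcheunS ρ₀ ρ₁ ρ₂ ρ₃ (y x)) / bcheunR β₀ β₁ β₂ β₃ (y x)
          - (1 / 2) * (deriv (fun t => deriv (deriv y) t / deriv y t) x
              - (1 / 2) * (deriv (deriv y) x / deriv y x) ^ 2)
        = ((y x) ^ 2 / (bcheunR β₀ β₁ β₂ β₃ (y x)) ^ 2) *
            (deriv (deriv (bcheunR β₀ β₁ β₂ β₃)) (y x)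
              + deriv (bcheunR β₀ β₁ β₂ β₃) (y x) / y x
              + bcheunR β₀ β₁ β₂ β₃ (y x) / (y x) ^ 2
              - (5 / 4) * (deriv (bcheunR β₀ β₁ β₂ β₃) (y x)) ^ 2
                / bcheunR β₀ β₁ β₂ β₃ (y x))
          - bcheunS ρ₀ ρ₁ ρ₂ ρ₃ (y x) / bcheunR β₀ β₁ β₂ β₃ (y x) := by
  -- Step A: formula for y'' on I
  have key : ∀ x' ∈ I, deriv (deriv y) x'
      = (-2*β₃*(y x')^4 + 2*β₁*(y x')^2 + 4*β₀*(y x'))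
          / (bcheunR β₀ β₁ β₂ β₃ (y x'))^2 := by
    intro x' hx'
    have hv' := hy0 x' hx'
    have hp' := hR x' hx'
    have hyd : HasDerivAt y (deriv y x') x' := (hy x' hx').hasDerivAt
    have hnum : HasDerivAt (fun s : ℝ => 4*s^2) (8*(y x')) (y x') := by
      have e : (8:ℝ)*(y x') = 4 * (↑(2:ℕ) * (y x')^(2-1)) := by push_cast; ring
      rw [e]; exact (hasDerivAt_pow 2 (y x')).const_mul 4
    have hF := (hnum.div (aux_R_deriv β₀ β₁ β₂ β₃ (y x')) hp').comp x' hyd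
    have hev : (fun z => (deriv y z)^2)
        =ᶠ[nhds x'] (fun z => 4*(y z)^2 / bcheunR β₀ β₁ β₂ β₃ (y z)) := by
      filter_upwards [hI.mem_nhds hx'] with z hz using heq z hz
    have hlhs := hF.congr_of_eventuallyEq hev
    have hlhs2 : HasDerivAt (fun z => (deriv y z)^2)
        (2 * deriv y x' * deriv (deriv y) x') x' := by
      have h := ((hy' x' hx').hasDerivAt).pow 2
      have e : 2 * deriv y x' * deriv (deriv y) x'
          = ↑(2:ℕ) * (deriv y x')^(2-1) * deriv (deriv y) x' := by push_cast; ring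
      rw [e]; exact h
    have huniq := hlhs2.unique hlhs
    have hcan : deriv y x' * (2 * deriv (deriv y) x')
        = deriv y x' * (2 * ((-2*β₃*(y x')^4 + 2*β₁*(y x')^2 + 4*β₀*(y x'))
            / (bcheunR β₀ β₁ β₂ β₃ (y x'))^2)) := by
      calc deriv y x' * (2 * deriv (deriv y) x')
          = 2 * deriv y x' * deriv (deriv y) x' := by ring
        _ = (8 * y x' * bcheunR β₀ β₁ β₂ β₃ (y x')
              - 4 * (y x')^2 * (3 * β₃ * (y x')^2 + 2 * β₂ * (y x') + β₁))
              / (bcheunR β₀ β₁ β₂ β₃ (y x'))^2 * deriv y x' := huniq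
        _ = _ := by
            field_simp [hp']
            simp only [bcheunR]
            ring
    have := mul_left_cancel₀ hv' hcan
    linarith
  -- now fix x
  intro x hx
  have hv := hy0 x hx
  have ht := hyne x hx
  have hp := hR x hx
  have hyd : HasDerivAt y (deriv y x) x := (hy x hx).hasDerivAt
  -- Step B: derivative of y''/y'
  have hgd := (aux_N_deriv β₀ β₁ β₃ (y x)).div (aux_Rsq_deriv β₀ β₁ β₂ β₃ (y x))
      (pow_ne_zero 2 hp)
  have hcompg := hgd.comp x hyd
  have hden : HasDerivAt (deriv y) (deriv (deriv y) x) x := (hy' x hx).hasDerivAt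
  have hq := hcompg.div hden hv
  have hev2 : (fun z => deriv (deriv y) z / deriv y z)
      =ᶠ[nhds x] (fun z => (-2*β₃*(y z)^4 + 2*β₁*(y z)^2 + 4*β₀*(y z))
          / (bcheunR β₀ β₁ β₂ β₃ (y z))^2 / deriv y z) := by
    filter_upwards [hI.mem_nhds hx] with z hz
    rw [key z hz]
  have hd := (hq.congr_of_eventuallyEq hev2).deriv
  rw [hd, key x hx, aux_derivderivR, aux_derivR]
  have e1 : ∀ A B v : ℝ, v ≠ 0 → (A * v * v - B)/v^2 = A - B/v^2 := by
    intro A B v hv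
    field_simp
  rw [e1 _ _ _ hv]
  rw [div_pow ((-2*β₃*(y x)^4 + 2*β₁*(y x)^2 + 4*β₀*(y x))
      / (bcheunR β₀ β₁ β₂ β₃ (y x))^2) (deriv y x) 2]
  rw [heq x hx]
  have hpe : β₃*(y x)^3 + β₂*(y x)^2 + β₁*(y x) + β₀ ≠ 0 := by
    simpa [bcheunR] using hp
  simp only [Function.comp_apply, Pi.div_apply, bcheunR, bcheunS]
  have hpe : β₃*(y x)^3 + β₂*(y x)^2 + β₁*(y x) + β₀ ≠ 0 := by
    simpa [bcheunR] using hp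
  rw [neg_div]
  linarith [aux_core (y x) β₀ β₁ β₂ β₃ ht hpe]
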